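/- Consider the 2n-player game consisting of n independent pairs of players (R_i, C_i), where pair i plays the 2×2 zero-sum game with payoffs u_{R_i}(1,1) = 2^i − 1, u_{R_i}(2,2) = 1, u_{R_i}(1,2) = u_{R_i}(2,1) = 0, u_{C_i} = −u_{R_i}, and payoffs of pair i do not depend on actions of other pairs. Then every (exact) correlated equilibrium of this game has support of size at least n. -/

import Mathlib

open Finset


lemma sum_biUnion_le' {ι α : Type*} [DecidableEq α] (s : Finset ι) (t : ι → Finset α)
    (f : α → ℝ) (hf : ∀ a, 0 ≤ f a) :
    ∑ a ∈ s.biUnion t, f a ≤ ∑ i ∈ s, ∑ a ∈ t i, f a := by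
  classical
  induction s using Finset.induction_on with
  | empty => simp
  | insert _ _ hx ih =>
    rename_i j s'
    rw [Finset.biUnion_insert, Finset.sum_insert hx]
    calc ∑ a ∈ t j ∪ s'.biUnion t, f a
        = ∑ a ∈ t j, f a + ∑ a ∈ (s'.biUnion t) \ t j, f a := by
          rw [← Finset.sum_union (Finset.disjoint_sdiff)]
          congr 1
          rw [Finset.union_sdiff_self_eq_union]
      _ ≤ ∑ a ∈ t j, f a + ∑ a ∈ s'.biUnion t, f a :=
          add_le_add_right (Finset.sum_le_sum_of_subset_of_nonneg (Finset.sdiff_subset)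
            (fun a _ _ => hf a)) _
      _ ≤ _ := by gcongr


/-- In the 2n-player game made of n independent pairs `(R_i, C_i)`
    (player `(i, false)` is `R_i`, player `(i, true)` is `C_i`), where pair `i` plays
    the 2×2 zero-sum game with `u_{R_i}(1,1) = 2^{i} - 1` (for `i = 1, …, n`),
    `u_{R_i}(2,2) = 1`, off-diagonal 0, and `u_{C_i} = -u_{R_i}`, every exact
    correlated equilibrium has support of size at least `n`.
    (Action 1 is encoded as `0 : Fin 2`, action 2 as `1 : Fin 2`; the pair index
    `i : Fin n` corresponds to `i+1` in the paper, so `v_i = 2^{i+1} - 1`.) -/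
theorem pairs_game_ce_support (n : ℕ)
    (u : Fin n × Bool → ((Fin n × Bool) → Fin 2) → ℝ)
    (hu : ∀ (i : Fin n) (role : Bool) (a : (Fin n × Bool) → Fin 2),
      u (i, role) a =
        (if role then -1 else 1) *
          (if a (i, false) = 0 ∧ a (i, true) = 0 then (2 : ℝ) ^ ((i : ℕ) + 1) - 1
           else if a (i, false) = 1 ∧ a (i, true) = 1 then 1 else 0))
    (x : ((Fin n × Bool) → Fin 2) → ℝ)
    (hx0 : ∀ a, 0 ≤ x a) (hx1 : ∑ a, x a = 1)
    (hCE : ∀ (p : Fin n × Bool) (ap j : Fin 2),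
      ∑ a : (Fin n × Bool) → Fin 2,
        (if a p = ap then (u p (Function.update a p j) - u p a) * x a else 0) ≤ 0) :
    n ≤ (Finset.univ.filter (fun a : (Fin n × Bool) → Fin 2 => x a ≠ 0)).card := by
  classical
  set S := Finset.univ.filter (fun a : (Fin n × Bool) → Fin 2 => x a ≠ 0) with hSdef
  -- the four joint probabilities of pair i
  set Q : Fin n → Fin 2 → Fin 2 → ℝ := fun i b c =>
    ∑ a : (Fin n × Bool) → Fin 2, if a (i, false) = b ∧ a (i, true) = c then x a else 0
    with hQdef
  have hQnn : ∀ i b c, 0 ≤ Q i b c := by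
    intro i b c
    apply Finset.sum_nonneg
    intro a _
    split
    · exact hx0 a
    · exact le_rfl
  -- the marginal of R_i playing 0
  set M : Fin n → ℝ := fun i =>
    ∑ a : (Fin n × Bool) → Fin 2, if a (i, false) = 0 then x a else 0 with hMdef
  have hne : ∀ i : Fin n, ((i, true) : Fin n × Bool) ≠ (i, false) := by simp
  have hne' : ∀ i : Fin n, ((i, false) : Fin n × Bool) ≠ (i, true) := by simp
  -- key: the marginal is 2^{-(i+1)}
  have hM : ∀ i : Fin n, M i = ((2:ℝ)⁻¹) ^ ((i:ℕ) + 1) := by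
    intro i
    set v : ℝ := (2:ℝ) ^ ((i:ℕ) + 1) - 1 with hvdef
    have hv1 : (1:ℝ) ≤ v := by
      have : (2:ℝ) ≤ 2 ^ ((i:ℕ) + 1) := le_self_pow₀ (by norm_num) (Nat.succ_ne_zero _)
      simp only [hvdef]; linarith
    have hv0 : (0:ℝ) < v := by linarith
    -- inequality 1 : -v * Q i 0 0 + Q i 0 1 ≤ 0
    have h1 : -v * Q i 0 0 + Q i 0 1 ≤ 0 := by
      have key := hCE (i, false) 0 1
      rw [show (∑ a : (Fin n × Bool) → Fin 2,
        (if a (i, false) = 0 then (u (i,false) (Function.update a (i,false) 1) - u (i,false) a) * x a else 0))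
        = -v * Q i 0 0 + Q i 0 1 by
          simp only [hQdef, Finset.mul_sum, ← Finset.sum_add_distrib]
          apply Finset.sum_congr rfl
          intro a _
          rcases show a (i,false) = 0 ∨ a (i,false) = 1 by omega with h0 | h0 <;>
            rcases show a (i,true) = 0 ∨ a (i,true) = 1 by omega with hb | hb <;>
              simp [hu, Function.update_apply, h0, hb, hne i, hvdef] <;> ring] at key
      exact key
    -- inequality 2 : v * Q i 1 0 - Q i 1 1 ≤ 0
    have h2 : v * Q i 1 0 - Q i 1 1 ≤ 0 := by
      have key := hCE (i, false) 1 0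
      rw [show (∑ a : (Fin n × Bool) → Fin 2,
        (if a (i, false) = 1 then (u (i,false) (Function.update a (i,false) 0) - u (i,false) a) * x a else 0))
        = v * Q i 1 0 - Q i 1 1 by
          simp only [hQdef, Finset.mul_sum, sub_eq_add_neg, ← Finset.sum_neg_distrib,
            ← Finset.sum_add_distrib]
          apply Finset.sum_congr rfl
          intro a _
          rcases show a (i,false) = 0 ∨ a (i,false) = 1 by omega with h0 | h0 <;>
            rcases show a (i,true) = 0 ∨ a (i,true) = 1 by omega with hb | hb <;>
              simp [hu, Function.update_apply, h0, hb, hne i, hvdef] <;> ring] at key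
      exact key
    -- inequality 3 : v * Q i 0 0 - Q i 1 0 ≤ 0
    have h3 : v * Q i 0 0 - Q i 1 0 ≤ 0 := by
      have key := hCE (i, true) 0 1
      rw [show (∑ a : (Fin n × Bool) → Fin 2,
        (if a (i, true) = 0 then (u (i,true) (Function.update a (i,true) 1) - u (i,true) a) * x a else 0))
        = v * Q i 0 0 - Q i 1 0 by
          simp only [hQdef, Finset.mul_sum, sub_eq_add_neg, ← Finset.sum_neg_distrib,
            ← Finset.sum_add_distrib]
          apply Finset.sum_congr rfl
          intro a _
          rcases show a (i,false) = 0 ∨ a (i,false) = 1 by omega with h0 | h0 <;>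
            rcases show a (i,true) = 0 ∨ a (i,true) = 1 by omega with hb | hb <;>
              simp [hu, Function.update_apply, h0, hb, hne' i, hvdef] <;> ring] at key
      exact key
    -- inequality 4 : -v * Q i 0 1 + Q i 1 1 ≤ 0
    have h4 : -v * Q i 0 1 + Q i 1 1 ≤ 0 := by
      have key := hCE (i, true) 1 0
      rw [show (∑ a : (Fin n × Bool) → Fin 2,
        (if a (i, true) = 1 then (u (i,true) (Function.update a (i,true) 0) - u (i,true) a) * x a else 0))
        = -v * Q i 0 1 + Q i 1 1 by
          simp only [hQdef, Finset.mul_sum, ← Finset.sum_add_distrib]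
          apply Finset.sum_congr rfl
          intro a _
          rcases show a (i,false) = 0 ∨ a (i,false) = 1 by omega with h0 | h0 <;>
            rcases show a (i,true) = 0 ∨ a (i,true) = 1 by omega with hb | hb <;>
              simp [hu, Function.update_apply, h0, hb, hne' i, hvdef] <;> ring] at key
      exact key
    -- total probability splits into the four cells
    have htot : Q i 0 0 + Q i 0 1 + Q i 1 0 + Q i 1 1 = 1 := by
      rw [← hx1]
      simp only [hQdef, ← Finset.sum_add_distrib]
      apply Finset.sum_congr rfl
      intro a _
      rcases show a (i,false) = 0 ∨ a (i,false) = 1 by omega with h0 | h0 <;>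
        rcases show a (i,true) = 0 ∨ a (i,true) = 1 by omega with hb | hb <;>
          simp [h0, hb]
    -- the marginal splits into two cells
    have hMsplit : M i = Q i 0 0 + Q i 0 1 := by
      simp only [hMdef, hQdef, ← Finset.sum_add_distrib]
      apply Finset.sum_congr rfl
      intro a _
      rcases show a (i,false) = 0 ∨ a (i,false) = 1 by omega with h0 | h0 <;>
        rcases show a (i,true) = 0 ∨ a (i,true) = 1 by omega with hb | hb <;>
          simp [h0, hb]
    -- chain of inequalities forces equalities
    have c1 : v * Q i 0 1 ≤ v * (v * Q i 0 0) :=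
      mul_le_mul_of_nonneg_left (by linarith) (le_of_lt hv0)
    have c2 : v * (v * Q i 0 0) ≤ v * Q i 1 0 :=
      mul_le_mul_of_nonneg_left (by linarith) (le_of_lt hv0)
    have c3 : v * Q i 1 0 ≤ Q i 1 1 := by linarith
    have c4 : Q i 1 1 ≤ v * Q i 0 1 := by linarith
    have eB : Q i 0 1 = v * Q i 0 0 :=
      mul_left_cancel₀ (ne_of_gt hv0) (by linarith)
    have eC : Q i 1 0 = v * Q i 0 0 :=
      mul_left_cancel₀ (ne_of_gt hv0) (by linarith)
    have eD : Q i 1 1 = v * (v * Q i 0 0) := by linarith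
    have hmul : M i * (v + 1) = 1 := by
      rw [hMsplit]
      rw [eB, eC, eD] at htot
      linear_combination htot + (v + 1) * eB
    have hv2 : v + 1 = (2:ℝ) ^ ((i:ℕ) + 1) := by simp [hvdef]
    rw [hv2] at hmul
    rw [inv_pow]
    exact eq_inv_of_mul_eq_one_left (by linarith [hmul] )
  -- support-restricted marginal events
  set T : Fin n → Finset ((Fin n × Bool) → Fin 2) := fun i =>
    S.filter (fun a => a (i, false) = 0) with hTdef
  have hTS : ∀ i, T i ⊆ S := fun i => Finset.filter_subset _ _
  have hTsum : ∀ i : Fin n, ∑ a ∈ T i, x a = ((2:ℝ)⁻¹) ^ ((i:ℕ) + 1) := by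
    intro i
    rw [← hM i]
    simp only [hMdef]
    rw [← Finset.sum_filter]
    apply Finset.sum_subset
    · intro a ha
      simp only [hTdef, hSdef, Finset.mem_filter, Finset.mem_univ, true_and] at ha ⊢
      exact ha.2
    · intro a ha hna
      simp only [hTdef, hSdef, Finset.mem_filter, Finset.mem_univ, true_and] at ha hna
      by_contra hx
      exact hna ⟨hx, ha⟩
  -- geometric tail bound
  have hgeo : ∀ i : Fin n, ∑ j ∈ Finset.univ.filter (fun j : Fin n => i < j),
      ((2:ℝ)⁻¹) ^ ((j:ℕ) + 1) < ((2:ℝ)⁻¹) ^ ((i:ℕ) + 1) := by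
    intro i
    have h1 : ∑ j ∈ Finset.univ.filter (fun j : Fin n => i < j), ((2:ℝ)⁻¹) ^ ((j:ℕ) + 1)
        = ∑ k ∈ Finset.Ico ((i:ℕ) + 1) n, ((2:ℝ)⁻¹) ^ (k + 1) := by
      rw [Finset.sum_filter]
      simp only [Fin.lt_def]
      rw [Fin.sum_univ_eq_sum_range (fun k => if (i:ℕ) < k then ((2:ℝ)⁻¹) ^ (k + 1) else 0) n]
      rw [← Finset.sum_filter]
      apply Finset.sum_congr _ (fun _ _ => rfl)
      ext k
      simp only [Finset.mem_filter, Finset.mem_range, Finset.mem_Ico]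
      omega
    have h2 : ∑ k ∈ Finset.Ico ((i:ℕ) + 1) n, ((2:ℝ)⁻¹) ^ (k + 1)
        = (2:ℝ)⁻¹ * ∑ k ∈ Finset.Ico ((i:ℕ) + 1) n, ((2:ℝ)⁻¹) ^ k := by
      rw [Finset.mul_sum]
      exact Finset.sum_congr rfl (fun k _ => by ring)
    rw [h1, h2, geom_sum_Ico (by norm_num : ((2:ℝ)⁻¹) ≠ 1) i.isLt]
    have hp : (0:ℝ) < ((2:ℝ)⁻¹) ^ n := by positivity
    have heq : (2:ℝ)⁻¹ * (((2:ℝ)⁻¹ ^ n - (2:ℝ)⁻¹ ^ ((i:ℕ) + 1)) / ((2:ℝ)⁻¹ - 1))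
        = (2:ℝ)⁻¹ ^ ((i:ℕ) + 1) - (2:ℝ)⁻¹ ^ n := by
      rw [show ((2:ℝ)⁻¹ - 1) = -(2⁻¹) by norm_num, div_neg, div_eq_mul_inv, inv_inv]
      ring
    rw [heq]
    linarith
  -- pick a witness in each T i not covered by later T j's
  have hwit : ∀ i : Fin n, ∃ e, e ∈ T i ∧
      e ∉ (Finset.univ.filter (fun j : Fin n => i < j)).biUnion T := by
    intro i
    apply Finset.not_subset.mp
    intro hsub
    have hle := Finset.sum_le_sum_of_subset_of_nonneg hsub (fun a _ _ => hx0 a)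
    have hle2 := sum_biUnion_le' (Finset.univ.filter (fun j : Fin n => i < j)) T x hx0
    have heq : ∑ j ∈ Finset.univ.filter (fun j : Fin n => i < j), ∑ a ∈ T j, x a
        = ∑ j ∈ Finset.univ.filter (fun j : Fin n => i < j), ((2:ℝ)⁻¹) ^ ((j:ℕ) + 1) :=
      Finset.sum_congr rfl (fun j _ => hTsum j)
    have hg := hgeo i
    rw [hTsum i] at hle
    linarith
  choose e he1 he2 using hwit
  have key : ∀ {i j : Fin n}, i < j → e i ≠ e j := by
    intro i j hij heq
    apply he2 i
    exact Finset.mem_biUnion.mpr ⟨j, by simp [hij], heq ▸ he1 j⟩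
  have hinj : Set.InjOn e (Finset.univ : Finset (Fin n)) := by
    intro i _ j _ hij
    by_contra hne2
    rcases Ne.lt_or_gt hne2 with h | h
    · exact key h hij
    · exact key h hij.symm
  calc n = (Finset.univ : Finset (Fin n)).card := by simp
    _ ≤ S.card := Finset.card_le_card_of_injOn e (fun i _ => hTS i (he1 i)) hinj
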